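/- For any two OVs C^a and C^b there exist time-aligned OVs D^a and D^b (i.e. D^a and D^b use the same sequence of time points) such that ⟦D^a⟧ = ⟦C^a⟧ and ⟦D^b⟧ = ⟦C^b⟧. -/

import Mathlib

open Set

/-- The semantics of an operation volume (OV) with regions `R` and strictly
increasing time points `T`: the subset of space-time
`(⋃_{i<k} R_i × [T_i, T_{i+1})) ∪ (R_last × [T_last, ∞))`. -/
def OVsem {k : ℕ} (R : Fin (k + 1) → Set (Fin 3 → ℝ)) (T : Fin (k + 1) → ℝ) :
    Set ((Fin 3 → ℝ) × ℝ) :=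
  (⋃ i : Fin k,
      {p : (Fin 3 → ℝ) × ℝ | p.1 ∈ R i.castSucc ∧ T i.castSucc ≤ p.2 ∧ p.2 < T i.succ}) ∪
    {p : (Fin 3 → ℝ) × ℝ | p.1 ∈ R (Fin.last k) ∧ T (Fin.last k) ≤ p.2}

/-- The region occupied at time `t`: the region of the greatest index `i`
with `T i ≤ t` (empty set if there is no such index). -/
def regAt {k : ℕ} (R : Fin (k + 1) → Set (Fin 3 → ℝ)) (T : Fin (k + 1) → ℝ) (t : ℝ) :
    Set (Fin 3 → ℝ) :=
  {r | ∃ i, r ∈ R i ∧ T i ≤ t ∧ ∀ j, T j ≤ t → j ≤ i}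

lemma exists_greatest {n : ℕ} (P : Fin (n + 1) → Prop) [DecidablePred P]
    (h : ∃ j, P j) : ∃ j, P j ∧ ∀ j', P j' → j' ≤ j := by
  classical
  obtain ⟨j0, hj0⟩ := h
  set s := Finset.univ.filter P with hs_def
  have hs : s.Nonempty := ⟨j0, by simp [hs_def, hj0]⟩
  refine ⟨s.max' hs, ?_, ?_⟩
  · have := s.max'_mem hs; simpa [hs_def] using this
  · intro j' hj'; exact s.le_max' j' (by simp [hs_def, hj'])

lemma OVsem_eq {k : ℕ} (R : Fin (k + 1) → Set (Fin 3 → ℝ)) (T : Fin (k + 1) → ℝ)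
    (hT : StrictMono T) :
    OVsem R T = {p | p.1 ∈ regAt R T p.2} := by
  ext p
  constructor
  · rintro (hp | hp)
    · simp only [mem_iUnion, mem_setOf_eq] at hp
      obtain ⟨i, hri, hle, hlt⟩ := hp
      refine ⟨i.castSucc, hri, hle, ?_⟩
      intro j hj
      have : T j < T i.succ := lt_of_le_of_lt hj hlt
      have hjlt : j < i.succ := hT.lt_iff_lt.mp this
      simp only [Fin.lt_def, Fin.le_def, Fin.val_succ, Fin.coe_castSucc] at hjlt ⊢
      omega
    · exact ⟨Fin.last k, hp.1, hp.2, fun j _ => Fin.le_last j⟩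
  · rintro ⟨i, hri, hle, hmax⟩
    by_cases hi : i = Fin.last k
    · right
      exact ⟨hi ▸ hri, hi ▸ hle⟩
    · obtain ⟨i', rfl⟩ := Fin.exists_castSucc_eq.mpr hi
      left
      simp only [mem_iUnion, mem_setOf_eq]
      refine ⟨i', hri, hle, ?_⟩
      by_contra hcon
      push_neg at hcon
      have := hmax i'.succ hcon
      have h2 : i'.castSucc < i'.succ := Fin.castSucc_lt_succ
      exact absurd this (not_le.mpr h2)

lemma regAt_regAt {k m : ℕ} (R : Fin (k + 1) → Set (Fin 3 → ℝ)) (T : Fin (k + 1) → ℝ)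
    (U : Fin (m + 1) → ℝ) (hU : Monotone U)
    (hrange : ∀ i, ∃ j, U j = T i) (t : ℝ) :
    regAt (fun j => regAt R T (U j)) U t = regAt R T t := by
  classical
  ext r
  constructor
  · rintro ⟨j, ⟨i, hri, hTi, hmaxi⟩, hUj, hmaxj⟩
    refine ⟨i, hri, hTi.trans hUj, ?_⟩
    intro i' hi'
    obtain ⟨j', hj'⟩ := hrange i'
    have hjj : j' ≤ j := hmaxj j' (le_of_eq_of_le hj' hi')
    exact hmaxi i' (hj'.symm.trans_le (hU hjj))
  · rintro ⟨i, hri, hTi, hmaxi⟩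
    obtain ⟨j0, hj0⟩ := hrange i
    obtain ⟨j, hj, hmaxj⟩ := exists_greatest (fun j => U j ≤ t) ⟨j0, by show U j0 ≤ t; rw [hj0]; exact hTi⟩
    refine ⟨j, ⟨i, hri, ?_, ?_⟩, hj, hmaxj⟩
    · have hjj : j0 ≤ j := hmaxj j0 (hj0 ▸ hTi)
      calc T i = U j0 := hj0.symm
        _ ≤ U j := hU hjj
    · intro i' hi'
      exact hmaxi i' (hi'.trans hj)

/-- For any two OVs `C^a` and `C^b` there exist time-aligned OVs `D^a` and
`D^b` (using the same sequence of time points `U`) with the same respective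
space-time semantics. -/
theorem exists_time_aligned {ka kb : ℕ}
    (Ra : Fin (ka + 1) → Set (Fin 3 → ℝ)) (Ta : Fin (ka + 1) → ℝ) (hTa : StrictMono Ta)
    (Rb : Fin (kb + 1) → Set (Fin 3 → ℝ)) (Tb : Fin (kb + 1) → ℝ) (hTb : StrictMono Tb) :
    ∃ (m : ℕ) (Sa Sb : Fin (m + 1) → Set (Fin 3 → ℝ)) (U : Fin (m + 1) → ℝ),
      StrictMono U ∧ OVsem Sa U = OVsem Ra Ta ∧ OVsem Sb U = OVsem Rb Tb := by
  classical
  set s : Finset ℝ := Finset.image Ta Finset.univ ∪ Finset.image Tb Finset.univ with hs_def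
  have hsne : s.Nonempty := ⟨Ta 0, by simp [hs_def]⟩
  have hcard : s.card = (s.card - 1) + 1 := by
    have := Finset.card_pos.mpr hsne
    omega
  set m := s.card - 1 with hm
  let e := s.orderIsoOfFin hcard
  set U : Fin (m + 1) → ℝ := fun j => (e j : ℝ) with hU_def
  have hUmono : StrictMono U := fun a b hab => by
    exact_mod_cast (Subtype.coe_lt_coe).mpr (e.strictMono hab)
  have hmem : ∀ x ∈ s, ∃ j, U j = x := by
    intro x hx
    exact ⟨e.symm ⟨x, hx⟩, by simp [hU_def]⟩
  have hra : ∀ i, ∃ j, U j = Ta i := fun i => hmem _ (by simp [hs_def])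
  have hrb : ∀ i, ∃ j, U j = Tb i := fun i => hmem _ (by simp [hs_def])
  refine ⟨m, fun j => regAt Ra Ta (U j), fun j => regAt Rb Tb (U j), U, hUmono, ?_, ?_⟩
  · rw [OVsem_eq _ _ hUmono, OVsem_eq _ _ hTa]
    ext p
    simp only [mem_setOf_eq, regAt_regAt Ra Ta U hUmono.monotone hra]
  · rw [OVsem_eq _ _ hUmono, OVsem_eq _ _ hTb]
    ext p
    simp only [mem_setOf_eq, regAt_regAt Rb Tb U hUmono.monotone hrb]
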